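/- Let m and m̄ be 3×3 real matrices related by dev sym m = −dev sym m̄, skew m = skew m̄, and tr m = (1/2)·tr m̄ (the correspondence between the dislocation-format and classical-format Cosserat moment stress tensors). Then for every angle φ ∈ ℝ, with e_r = (cos φ, sin φ, 0), e_φ = (−sin φ, cos φ, 0), e_z = (0,0,1), one has ⟨skew(m × e_z)·e_φ, e_r⟩ − ⟨skew(m × e_z)·e_r, e_φ⟩ = −⟨m̄·e_z, e_z⟩ = −m̄₃₃. -/

import Mathlib

open Matrix Real

noncomputable section

abbrev Mat3 := Matrix (Fin 3) (Fin 3) ℝ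

/-- Symmetric part of a matrix. -/
def symm3 (P : Mat3) : Mat3 := (1/2 : ℝ) • (P + Pᵀ)

/-- Skew-symmetric part of a matrix. -/
def skew3 (P : Mat3) : Mat3 := (1/2 : ℝ) • (P - Pᵀ)

/-- Deviatoric part of a matrix. -/
def dev3 (P : Mat3) : Mat3 := P - (Matrix.trace P / 3) • (1 : Mat3)

/-- Cross product of two vectors in ℝ³. -/
def cross3v (v w : Fin 3 → ℝ) : Fin 3 → ℝ :=
  ![v 1 * w 2 - v 2 * w 1, v 2 * w 0 - v 0 * w 2, v 0 * w 1 - v 1 * w 0]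

/-- Row-wise cross product of a matrix with a vector. -/
def crossMat (m : Mat3) (b : Fin 3 → ℝ) : Mat3 :=
  Matrix.of fun i => cross3v (fun j => m i j) b

/-- Radial unit vector. -/
def eR (φ : ℝ) : Fin 3 → ℝ := ![Real.cos φ, Real.sin φ, 0]

/-- Tangential unit vector. -/
def ePhi (φ : ℝ) : Fin 3 → ℝ := ![-Real.sin φ, Real.cos φ, 0]

/-- Axial unit vector. -/
def eZ : Fin 3 → ℝ := ![0, 0, 1]

/-- the higher-order torque density in dislocation format equals −m̄₃₃ in the
classical format, for moment tensors related by the Cosserat correspondence. -/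
theorem torque_density_classical_format (m mbar : Mat3)
    (hdev : dev3 (symm3 m) = -dev3 (symm3 mbar))
    (hskew : skew3 m = skew3 mbar)
    (htr : Matrix.trace m = (1/2 : ℝ) * Matrix.trace mbar) :
    ∀ φ : ℝ,
      (skew3 (crossMat m eZ) *ᵥ ePhi φ) ⬝ᵥ eR φ
          - (skew3 (crossMat m eZ) *ᵥ eR φ) ⬝ᵥ ePhi φ
        = -((mbar *ᵥ eZ) ⬝ᵥ eZ) ∧
      (mbar *ᵥ eZ) ⬝ᵥ eZ = mbar 2 2 := by
  intro φ
  have h22 := congrFun (congrFun hdev 2) 2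
  simp only [dev3, symm3, Matrix.trace, Matrix.diag, Fin.sum_univ_three, Matrix.sub_apply,
    Matrix.neg_apply, Matrix.smul_apply, Matrix.add_apply, Matrix.one_apply,
    Matrix.transpose_apply, smul_eq_mul] at h22 htr
  norm_num at h22
  constructor
  · simp only [skew3, crossMat, cross3v, eR, ePhi, eZ, Matrix.mulVec, dotProduct,
      Fin.sum_univ_three, Matrix.smul_apply, Matrix.sub_apply, Matrix.transpose_apply,
      Matrix.of_apply, smul_eq_mul]
    norm_num [Matrix.cons_val_zero, Matrix.cons_val_one, Matrix.cons_val_two]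
    linear_combination (-(m 0 0 + m 1 1)) * Real.sin_sq_add_cos_sq φ + h22 - (2/3 : ℝ) * htr
  · simp [Matrix.mulVec, dotProduct, eZ, Fin.sum_univ_three]
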